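/- arXiv:1110.1842 — 11 statements merged into one kernel-verified Lean document; each statement's English description precedes it below -/
import Mathlib

section
/- Let Π be an anonymous system with failure pattern Correct, and let a_sigma be a history satisfying all four AΣ properties (Validity, Monotonicity, Liveness, Safety). Define h_labels_p^τ := {x : ∃τ' ≤ τ, ∃y, (x,y) ∈ a_sigma_p^{τ'}} and h_quora_p^τ := {(x, ⊥^y) : (x,y) ∈ a_sigma_p^τ}. Then the pair (h_quora, h_labels) satisfies all four HΣ properties (Validity, Monotonicity, Liveness, Safety). (Theorem 2: the class HΣ can be obtained from the class AΣ in an anonymous asynchronous system without communication.) -/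
/-- In an anonymous system (identifiers all equal `()`, the unique
element of `Unit`, so that `I(S) = ⊥^{|S|} = Multiset.replicate S.ncard ()`),
if `a_sigma` satisfies the four AΣ properties then the derived pair
`(h_quora, h_labels)` satisfies the four HΣ properties. -/
theorem astohs_all
    {Proc : Type*} [Fintype Proc] [Nonempty Proc]
    {L : Type*}
    (Correct : Set Proc) (hC : Correct.Nonempty)
    (a_sigma : Proc → ℕ → Finset (L × ℕ))
    -- S_A(x) = set of processes that ever output a pair with label x
    (SA : L → Set Proc)
    (hSA : ∀ x, SA x = {p | ∃ τ y, (x, y) ∈ a_sigma p τ})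
    -- AΣ Validity
    (aValidity : ∀ p τ x y y',
      (x, y) ∈ a_sigma p τ → (x, y') ∈ a_sigma p τ → y = y')
    -- AΣ Monotonicity
    (aMonotonicity : ∀ p τ x y, (x, y) ∈ a_sigma p τ →
      ∀ τ', τ ≤ τ' → ∃ y' ≤ y, (x, y') ∈ a_sigma p τ')
    -- AΣ Liveness
    (aLiveness : ∀ p ∈ Correct, ∃ τ, ∀ τ', τ ≤ τ' →
      ∃ x y, (x, y) ∈ a_sigma p τ' ∧ y ≤ (SA x ∩ Correct).ncard)
    -- AΣ Safety
    (aSafety : ∀ p₁ p₂ τ₁ τ₂ x₁ y₁ x₂ y₂,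
      (x₁, y₁) ∈ a_sigma p₁ τ₁ → (x₂, y₂) ∈ a_sigma p₂ τ₂ →
      ∀ T₁ T₂ : Set Proc, T₁ ⊆ SA x₁ → T₂ ⊆ SA x₂ →
      T₁.ncard = y₁ → T₂.ncard = y₂ → (T₁ ∩ T₂).Nonempty)
    -- the derived HΣ history
    (h_labels : Proc → ℕ → Set L)
    (hlab : ∀ p τ, h_labels p τ = {x | ∃ τ' ≤ τ, ∃ y, (x, y) ∈ a_sigma p τ'})
    (h_quora : Proc → ℕ → Set (L × Multiset Unit))
    (hquo : ∀ p τ, h_quora p τ =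
      {q | ∃ x y, (x, y) ∈ a_sigma p τ ∧ q = (x, Multiset.replicate y ())})
    -- S(x) = set of processes that ever have label x
    (S : L → Set Proc)
    (hS : ∀ x, S x = {p | ∃ τ, x ∈ h_labels p τ}) :
    -- HΣ Validity
    (∀ p τ x m m', (x, m) ∈ h_quora p τ → (x, m') ∈ h_quora p τ → m = m') ∧
    -- HΣ Monotonicity
    (∀ p τ τ', τ ≤ τ' → h_labels p τ ⊆ h_labels p τ' ∧
      ∀ x m, (x, m) ∈ h_quora p τ → ∃ m' ≤ m, (x, m') ∈ h_quora p τ') ∧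
    -- HΣ Liveness  (here I(S(x) ∩ Correct) = ⊥^{|S(x) ∩ Correct|})
    (∀ p ∈ Correct, ∃ τ, ∀ τ', τ ≤ τ' → ∃ x m, (x, m) ∈ h_quora p τ' ∧
      m ≤ Multiset.replicate ((S x ∩ Correct).ncard) ()) ∧
    -- HΣ Safety  (here I(Q) = ⊥^{|Q|})
    (∀ p₁ p₂ τ₁ τ₂ x₁ m₁ x₂ m₂,
      (x₁, m₁) ∈ h_quora p₁ τ₁ → (x₂, m₂) ∈ h_quora p₂ τ₂ →
      ∀ Q₁ Q₂ : Set Proc, Q₁ ⊆ S x₁ → Q₂ ⊆ S x₂ →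
      Multiset.replicate Q₁.ncard () = m₁ → Multiset.replicate Q₂.ncard () = m₂ →
      (Q₁ ∩ Q₂).Nonempty) := by
  have hSeq : ∀ x, S x = SA x := by
    intro x
    rw [hS, hSA]
    ext p
    simp only [Set.mem_setOf_eq, hlab]
    constructor
    · rintro ⟨τ, τ', _, y, h⟩; exact ⟨τ', y, h⟩
    · rintro ⟨τ, y, h⟩; exact ⟨τ, τ, le_refl τ, y, h⟩
  refine ⟨?_, ?_, ?_, ?_⟩
  · -- Validity
    intro p τ x m m' hm hm'
    rw [hquo] at hm hm'
    obtain ⟨x₁, y₁, h₁, e₁⟩ := hm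
    obtain ⟨x₂, y₂, h₂, e₂⟩ := hm'
    obtain ⟨rfl, rfl⟩ := Prod.mk.injEq .. ▸ e₁
    obtain ⟨rfl, rfl⟩ := Prod.mk.injEq .. ▸ e₂
    rw [aValidity p τ _ y₁ y₂ h₁ h₂]
  · -- Monotonicity
    intro p τ τ' hττ'
    constructor
    · intro x hx
      rw [hlab] at hx ⊢
      obtain ⟨τ₀, hτ₀, y, h⟩ := hx
      exact ⟨τ₀, le_trans hτ₀ hττ', y, h⟩
    · intro x m hm
      rw [hquo] at hm
      obtain ⟨x₀, y₁, h₁, e₁⟩ := hm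
      obtain ⟨rfl, rfl⟩ := Prod.mk.injEq .. ▸ e₁
      obtain ⟨y', hy', h'⟩ := aMonotonicity p τ x y₁ h₁ τ' hττ'
      refine ⟨Multiset.replicate y' (), ?_, ?_⟩
      · exact (Multiset.replicate_le_replicate ()).mpr hy'
      · rw [hquo]; exact ⟨x, y', h', rfl⟩
  · -- Liveness
    intro p hp
    obtain ⟨τ, hτ⟩ := aLiveness p hp
    refine ⟨τ, fun τ' hττ' => ?_⟩
    obtain ⟨x, y, hxy, hy⟩ := hτ τ' hττ'
    refine ⟨x, Multiset.replicate y (), ?_, ?_⟩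
    · rw [hquo]; exact ⟨x, y, hxy, rfl⟩
    · rw [hSeq]; exact (Multiset.replicate_le_replicate ()).mpr hy
  · -- Safety
    intro p₁ p₂ τ₁ τ₂ x₁ m₁ x₂ m₂ hm₁ hm₂ Q₁ Q₂ hQ₁ hQ₂ hc₁ hc₂
    rw [hquo] at hm₁ hm₂
    obtain ⟨x₁', y₁, h₁, e₁⟩ := hm₁
    obtain ⟨rfl, rfl⟩ := Prod.mk.injEq .. ▸ e₁
    obtain ⟨x₂', y₂, h₂, e₂⟩ := hm₂
    obtain ⟨rfl, rfl⟩ := Prod.mk.injEq .. ▸ e₂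
    have hn₁ : Q₁.ncard = y₁ := by
      have := congrArg Multiset.card hc₁
      simpa using this
    have hn₂ : Q₂.ncard = y₂ := by
      have := congrArg Multiset.card hc₂
      simpa using this
    rw [hSeq] at hQ₁ hQ₂
    exact aSafety p₁ p₂ τ₁ τ₂ x₁ y₁ x₂ y₂ h₁ h₂ Q₁ Q₂ hQ₁ hQ₂ hn₁ hn₂
end

section
/- Let Π be an anonymous system with failure pattern Correct, and let a_sigma be a history satisfying the AΣ Safety property. Define h_labels_p^τ := {x : ∃τ' ≤ τ, ∃y, (x,y) ∈ a_sigma_p^{τ'}} and h_quora_p^τ := {(x, ⊥^y) : (x,y) ∈ a_sigma_p^τ}. Then (h_quora, h_labels) satisfies the HΣ Safety property: for all p₁,p₂ ∈ Π, τ₁,τ₂ ∈ ℕ, (x₁,m₁) ∈ h_quora_{p₁}^{τ₁}, (x₂,m₂) ∈ h_quora_{p₂}^{τ₂} and all Q₁ ⊆ S(x₁), Q₂ ⊆ S(x₂) with I(Q₁) = m₁ and I(Q₂) = m₂, Q₁ ∩ Q₂ ≠ ∅, where S(x) := {p ∈ Π : ∃τ, x ∈ h_labels_p^τ}. -/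
/-- In an anonymous system, if `a_sigma` satisfies the AΣ Safety
property, then the derived pair `(h_quora, h_labels)` satisfies the HΣ Safety
property (here `I(Q) = ⊥^{|Q|} = Multiset.replicate Q.ncard ()`). -/
theorem astohs_safety
    {Proc : Type*} [Fintype Proc] [Nonempty Proc]
    {L : Type*}
    (Correct : Set Proc) (hC : Correct.Nonempty)
    (a_sigma : Proc → ℕ → Finset (L × ℕ))
    (SA : L → Set Proc)
    (hSA : ∀ x, SA x = {p | ∃ τ y, (x, y) ∈ a_sigma p τ})
    -- AΣ Safety
    (aSafety : ∀ p₁ p₂ τ₁ τ₂ x₁ y₁ x₂ y₂,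
      (x₁, y₁) ∈ a_sigma p₁ τ₁ → (x₂, y₂) ∈ a_sigma p₂ τ₂ →
      ∀ T₁ T₂ : Set Proc, T₁ ⊆ SA x₁ → T₂ ⊆ SA x₂ →
      T₁.ncard = y₁ → T₂.ncard = y₂ → (T₁ ∩ T₂).Nonempty)
    (h_labels : Proc → ℕ → Set L)
    (hlab : ∀ p τ, h_labels p τ = {x | ∃ τ' ≤ τ, ∃ y, (x, y) ∈ a_sigma p τ'})
    (h_quora : Proc → ℕ → Set (L × Multiset Unit))
    (hquo : ∀ p τ, h_quora p τ =
      {q | ∃ x y, (x, y) ∈ a_sigma p τ ∧ q = (x, Multiset.replicate y ())})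
    (S : L → Set Proc)
    (hS : ∀ x, S x = {p | ∃ τ, x ∈ h_labels p τ}) :
    -- HΣ Safety
    ∀ p₁ p₂ τ₁ τ₂ x₁ m₁ x₂ m₂,
      (x₁, m₁) ∈ h_quora p₁ τ₁ → (x₂, m₂) ∈ h_quora p₂ τ₂ →
      ∀ Q₁ Q₂ : Set Proc, Q₁ ⊆ S x₁ → Q₂ ⊆ S x₂ →
      Multiset.replicate Q₁.ncard () = m₁ → Multiset.replicate Q₂.ncard () = m₂ →
      (Q₁ ∩ Q₂).Nonempty := by
  intro p₁ p₂ τ₁ τ₂ x₁ m₁ x₂ m₂ h1 h2 Q₁ Q₂ hQ1 hQ2 hm1 hm2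
  rw [hquo] at h1 h2
  obtain ⟨a₁, y₁, ha₁, he₁⟩ := h1
  obtain ⟨a₂, y₂, ha₂, he₂⟩ := h2
  obtain ⟨rfl, hm₁⟩ := Prod.mk.injEq .. ▸ he₁
  obtain ⟨rfl, hm₂⟩ := Prod.mk.injEq .. ▸ he₂
  have hSeq : ∀ x, S x = SA x := by
    intro x
    rw [hS, hSA]
    ext p
    simp only [Set.mem_setOf_eq, hlab]
    constructor
    · rintro ⟨τ, τ', _, y, h⟩; exact ⟨τ', y, h⟩
    · rintro ⟨τ, y, h⟩; exact ⟨τ, τ, le_refl _, y, h⟩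
  have hy1 : Q₁.ncard = y₁ := by
    have := hm1.trans hm₁
    simpa using congrArg Multiset.card this
  have hy2 : Q₂.ncard = y₂ := by
    have := hm2.trans hm₂
    simpa using congrArg Multiset.card this
  exact aSafety p₁ p₂ τ₁ τ₂ x₁ y₁ x₂ y₂ ha₁ ha₂ Q₁ Q₂ (hSeq x₁ ▸ hQ1) (hSeq x₂ ▸ hQ2) hy1 hy2
end

section
/- Let Π be an anonymous system with failure pattern Correct, and let a_sigma be a history satisfying the AΣ Liveness property. Define h_labels_p^τ := {x : ∃τ' ≤ τ, ∃y, (x,y) ∈ a_sigma_p^{τ'}} and h_quora_p^τ := {(x, ⊥^y) : (x,y) ∈ a_sigma_p^τ}. Then (h_quora, h_labels) satisfies the HΣ Liveness property: for every p ∈ Correct there is τ such that for every τ' ≥ τ some (x,m) ∈ h_quora_p^{τ'} has m ⊆ I(S(x) ∩ Correct), where S(x) := {p ∈ Π : ∃τ, x ∈ h_labels_p^τ}. -/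
/-- In an anonymous system, if `a_sigma` satisfies the AΣ Liveness
property, then the derived pair `(h_quora, h_labels)` satisfies the HΣ Liveness
property (here `I(S(x) ∩ Correct) = ⊥^{|S(x) ∩ Correct|}`). -/
theorem astohs_liveness
    {Proc : Type*} [Fintype Proc] [Nonempty Proc]
    {L : Type*}
    (Correct : Set Proc) (hC : Correct.Nonempty)
    (a_sigma : Proc → ℕ → Finset (L × ℕ))
    (SA : L → Set Proc)
    (hSA : ∀ x, SA x = {p | ∃ τ y, (x, y) ∈ a_sigma p τ})
    -- AΣ Liveness
    (aLiveness : ∀ p ∈ Correct, ∃ τ, ∀ τ', τ ≤ τ' →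
      ∃ x y, (x, y) ∈ a_sigma p τ' ∧ y ≤ (SA x ∩ Correct).ncard)
    (h_labels : Proc → ℕ → Set L)
    (hlab : ∀ p τ, h_labels p τ = {x | ∃ τ' ≤ τ, ∃ y, (x, y) ∈ a_sigma p τ'})
    (h_quora : Proc → ℕ → Set (L × Multiset Unit))
    (hquo : ∀ p τ, h_quora p τ =
      {q | ∃ x y, (x, y) ∈ a_sigma p τ ∧ q = (x, Multiset.replicate y ())})
    (S : L → Set Proc)
    (hS : ∀ x, S x = {p | ∃ τ, x ∈ h_labels p τ}) :
    -- HΣ Liveness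
    ∀ p ∈ Correct, ∃ τ, ∀ τ', τ ≤ τ' → ∃ x m, (x, m) ∈ h_quora p τ' ∧
      m ≤ Multiset.replicate ((S x ∩ Correct).ncard) () := by
  have hSeq : ∀ x, S x = SA x := by
    intro x
    rw [hS, hSA]
    ext p
    simp only [Set.mem_setOf_eq, hlab]
    constructor
    · rintro ⟨τ, τ', _, y, h⟩; exact ⟨τ', y, h⟩
    · rintro ⟨τ, y, h⟩; exact ⟨τ, τ, le_rfl, y, h⟩
  intro p hp
  obtain ⟨τ, hτ⟩ := aLiveness p hp
  refine ⟨τ, fun τ' hτ' => ?_⟩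
  obtain ⟨x, y, hxy, hle⟩ := hτ τ' hτ'
  refine ⟨x, Multiset.replicate y (), ?_, ?_⟩
  · rw [hquo]; exact ⟨x, y, hxy, rfl⟩
  · rw [hSeq]
    exact (Multiset.replicate_le_replicate ()).mpr hle
end

section
/- Let Π be an anonymous system with an evolving failure pattern F (antitone F : ℕ → Finset Π with Correct = ⋂_τ F(τ) nonempty), and let anap be an AP̄-history for F. Define (a process takes steps only while alive) h_labels_p^τ := {⊥^{anap_p^{τ'}} : τ' ≤ τ and p ∈ F(τ')} and h_quora_p^τ := {(⊥^{anap_p^{τ'}}, ⊥^{anap_p^{τ'}}) : τ' ≤ τ and p ∈ F(τ')}, where labels are themselves multisets of copies of ⊥. Then (h_quora, h_labels) satisfies all four HΣ properties (Validity, Monotonicity, Liveness, Safety). (A failure detector of class HΣ can be obtained from any detector of class AP̄ in an anonymous asynchronous system without communication.) -/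
/-- In an anonymous system with an evolving failure pattern `F`
(antitone, `Correct = ⋂ τ, F τ` nonempty), if `anap` is an AP̄-history
(Safety and Liveness), then the derived pair `(h_quora, h_labels)`, where a
process contributes the label `⊥^{anap p τ'}` (and the pair
`(⊥^{anap p τ'}, ⊥^{anap p τ'})`) for each time `τ' ≤ τ` at which it was
alive, satisfies the four HΣ properties.  Here labels are themselves
multisets of copies of `⊥ = ()`, and `I(Q) = ⊥^{|Q|}`. -/
theorem ap_to_hs_all
    {Proc : Type*} [Fintype Proc] [Nonempty Proc]
    (F : ℕ → Finset Proc) (hF : Antitone F)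
    (Correct : Set Proc)
    (hCdef : Correct = ⋂ τ, (F τ : Set Proc)) (hC : Correct.Nonempty)
    (anap : Proc → ℕ → ℕ)
    -- AP̄ Safety
    (apSafety : ∀ p τ, (F τ).card ≤ anap p τ)
    -- AP̄ Liveness
    (apLiveness : ∃ τ, ∀ p ∈ Correct, ∀ τ', τ ≤ τ' → anap p τ' = Correct.ncard)
    -- the derived HΣ history
    (h_labels : Proc → ℕ → Set (Multiset Unit))
    (hlab : ∀ p τ, h_labels p τ =
      {x | ∃ τ' ≤ τ, p ∈ F τ' ∧ x = Multiset.replicate (anap p τ') ()})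
    (h_quora : Proc → ℕ → Set (Multiset Unit × Multiset Unit))
    (hquo : ∀ p τ, h_quora p τ =
      {q | ∃ τ' ≤ τ, p ∈ F τ' ∧
        q = (Multiset.replicate (anap p τ') (), Multiset.replicate (anap p τ') ())})
    (S : Multiset Unit → Set Proc)
    (hS : ∀ x, S x = {p | ∃ τ, x ∈ h_labels p τ}) :
    -- HΣ Validity
    (∀ p τ x m m', (x, m) ∈ h_quora p τ → (x, m') ∈ h_quora p τ → m = m') ∧
    -- HΣ Monotonicity
    (∀ p τ τ', τ ≤ τ' → h_labels p τ ⊆ h_labels p τ' ∧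
      ∀ x m, (x, m) ∈ h_quora p τ → ∃ m' ≤ m, (x, m') ∈ h_quora p τ') ∧
    -- HΣ Liveness
    (∀ p ∈ Correct, ∃ τ, ∀ τ', τ ≤ τ' → ∃ x m, (x, m) ∈ h_quora p τ' ∧
      m ≤ Multiset.replicate ((S x ∩ Correct).ncard) ()) ∧
    -- HΣ Safety
    (∀ p₁ p₂ τ₁ τ₂ x₁ m₁ x₂ m₂,
      (x₁, m₁) ∈ h_quora p₁ τ₁ → (x₂, m₂) ∈ h_quora p₂ τ₂ →
      ∀ Q₁ Q₂ : Set Proc, Q₁ ⊆ S x₁ → Q₂ ⊆ S x₂ →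
      Multiset.replicate Q₁.ncard () = m₁ → Multiset.replicate Q₂.ncard () = m₂ →
      (Q₁ ∩ Q₂).Nonempty) := by
  have hCsub : ∀ τ, Correct ⊆ (F τ : Set Proc) := fun τ => hCdef ▸ Set.iInter_subset _ τ
  obtain ⟨c, hc⟩ := hC
  have Fpos : ∀ τ, 0 < (F τ).card := fun τ => Finset.card_pos.mpr ⟨c, hCsub τ hc⟩
  refine ⟨?_, ?_, ?_, ?_⟩
  · -- Validity
    intro p τ x m m' hm hm'
    rw [hquo] at hm hm'
    obtain ⟨σ, _, _, h1⟩ := hm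
    obtain ⟨σ', _, _, h2⟩ := hm'
    have e1 := Prod.ext_iff.mp h1
    have e2 := Prod.ext_iff.mp h2
    simp only at e1 e2
    rw [e1.2, e2.2, ← e1.1, ← e2.1]
  · -- Monotonicity
    intro p τ τ' hττ'
    constructor
    · intro x hx
      rw [hlab] at hx ⊢
      obtain ⟨σ, hστ, hp, hx⟩ := hx
      exact ⟨σ, hστ.trans hττ', hp, hx⟩
    · intro x m hm
      rw [hquo] at hm
      obtain ⟨σ, hστ, hp, hq⟩ := hm
      exact ⟨m, le_rfl, by rw [hquo]; exact ⟨σ, hστ.trans hττ', hp, hq⟩⟩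
  · -- Liveness
    intro p hp
    obtain ⟨τ₀, hL⟩ := apLiveness
    refine ⟨τ₀, fun τ' hτ' => ?_⟩
    set N := Correct.ncard with hN
    refine ⟨Multiset.replicate N (), Multiset.replicate N (), ?_, ?_⟩
    · rw [hquo]
      exact ⟨τ', le_rfl, hCsub τ' hp, by rw [hL p hp τ' hτ']⟩
    · have hsub : Correct ⊆ S (Multiset.replicate N ()) ∩ Correct := by
        intro q hq
        refine ⟨?_, hq⟩
        rw [hS]
        exact ⟨τ₀, by rw [hlab]; exact ⟨τ₀, le_rfl, hCsub τ₀ hq,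
          by rw [hL q hq τ₀ le_rfl]⟩⟩
      have hle : N ≤ (S (Multiset.replicate N ()) ∩ Correct).ncard :=
        Set.ncard_le_ncard hsub (Set.toFinite _)
      exact (Multiset.replicate_le_replicate ()).mpr hle
  · -- Safety
    intro p₁ p₂ τ₁ τ₂ x₁ m₁ x₂ m₂ h1 h2 Q₁ Q₂ hQ1 hQ2 hI1 hI2
    rw [hquo] at h1 h2
    obtain ⟨σ₁, _, hp1, hq1⟩ := h1
    obtain ⟨σ₂, _, hp2, hq2⟩ := h2
    set n₁ := anap p₁ σ₁ with hn₁
    set n₂ := anap p₂ σ₂ with hn₂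
    have e1 := Prod.ext_iff.mp hq1
    have e2 := Prod.ext_iff.mp hq2
    simp only at e1 e2
    have hx1 : x₁ = Multiset.replicate n₁ () := e1.1
    have hm1 : m₁ = Multiset.replicate n₁ () := e1.2
    have hx2 : x₂ = Multiset.replicate n₂ () := e2.1
    have hm2 : m₂ = Multiset.replicate n₂ () := e2.2
    have hcard1 : Q₁.ncard = n₁ := by
      have := congrArg Multiset.card (hI1.trans hm1)
      simpa using this
    have hcard2 : Q₂.ncard = n₂ := by
      have := congrArg Multiset.card (hI2.trans hm2)
      simpa using this
    have hn1pos : 0 < n₁ := lt_of_lt_of_le (Fpos σ₁) (apSafety p₁ σ₁)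
    have hn2pos : 0 < n₂ := lt_of_lt_of_le (Fpos σ₂) (apSafety p₂ σ₂)
    -- every member of Q₁ (resp. Q₂) has a witness time
    have mem1 : ∀ p ∈ Q₁, ∃ σ, p ∈ F σ ∧ anap p σ = n₁ := by
      intro p hp
      have hpS := hQ1 hp
      rw [hS] at hpS
      obtain ⟨τ, hτ⟩ := hpS
      rw [hlab] at hτ
      obtain ⟨σ, _, hFσ, hx⟩ := hτ
      refine ⟨σ, hFσ, ?_⟩
      have := congrArg Multiset.card (hx.symm.trans hx1)
      simpa using this
    have mem2 : ∀ p ∈ Q₂, ∃ σ, p ∈ F σ ∧ anap p σ = n₂ := by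
      intro p hp
      have hpS := hQ2 hp
      rw [hS] at hpS
      obtain ⟨τ, hτ⟩ := hpS
      rw [hlab] at hτ
      obtain ⟨σ, _, hFσ, hx⟩ := hτ
      refine ⟨σ, hFσ, ?_⟩
      have := congrArg Multiset.card (hx.symm.trans hx2)
      simpa using this
    by_contra hcon
    rw [Set.not_nonempty_iff_eq_empty] at hcon
    have hdisj : Disjoint Q₁ Q₂ := Set.disjoint_iff_inter_eq_empty.mpr hcon
    -- choose a witness time for each process in the union
    have memU : ∀ p : Proc, ∃ σ, p ∈ Q₁ ∪ Q₂ →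
        p ∈ F σ ∧ ((p ∈ Q₁ ∧ anap p σ = n₁) ∨ (p ∈ Q₂ ∧ anap p σ = n₂)) := by
      intro p
      by_cases hp : p ∈ Q₁ ∪ Q₂
      · rcases hp with hp | hp
        · obtain ⟨σ, hFσ, hσ⟩ := mem1 p hp
          exact ⟨σ, fun _ => ⟨hFσ, Or.inl ⟨hp, hσ⟩⟩⟩
        · obtain ⟨σ, hFσ, hσ⟩ := mem2 p hp
          exact ⟨σ, fun _ => ⟨hFσ, Or.inr ⟨hp, hσ⟩⟩⟩
      · exact ⟨0, fun h => absurd h hp⟩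
    choose g hg using memU
    have hUfin : (Q₁ ∪ Q₂).Finite := Set.toFinite _
    have hUne : (Q₁ ∪ Q₂).Nonempty := by
      have : 0 < Q₁.ncard := hcard1 ▸ hn1pos
      exact ((Set.ncard_pos (Set.toFinite _)).mp this).mono Set.subset_union_left
    have hTne : hUfin.toFinset.Nonempty := by
      rwa [Set.Finite.toFinset_nonempty]
    obtain ⟨q, hqT, hqmin⟩ := hUfin.toFinset.exists_min_image g hTne
    have hqU : q ∈ Q₁ ∪ Q₂ := hUfin.mem_toFinset.mp hqT
    -- all of Q₁ ∪ Q₂ is alive at time g q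
    have hsubF : Q₁ ∪ Q₂ ⊆ (F (g q) : Set Proc) := by
      intro p hp
      have hle : g q ≤ g p := hqmin p (hUfin.mem_toFinset.mpr hp)
      exact hF hle ((hg p hp).1)
    have hcardU : (Q₁ ∪ Q₂).ncard = n₁ + n₂ := by
      rw [Set.ncard_union_eq hdisj (Set.toFinite _) (Set.toFinite _), hcard1, hcard2]
    have hle1 : n₁ + n₂ ≤ (F (g q)).card := by
      have := Set.ncard_le_ncard hsubF (Finset.finite_toSet _)
      rwa [hcardU, Set.ncard_coe_finset] at this
    rcases (hg q hqU).2 with ⟨_, hq⟩ | ⟨_, hq⟩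
    · have : (F (g q)).card ≤ n₁ := hq ▸ apSafety q (g q)
      omega
    · have : (F (g q)).card ≤ n₂ := hq ▸ apSafety q (g q)
      omega
end

section
/- Let Π be a finite type, F : ℕ → Finset Π antitone with Correct = ⋂_τ F(τ) nonempty, and anap : Π → ℕ → ℕ satisfy anap_p^τ ≥ |F(τ)| for all p ∈ Π and τ ∈ ℕ. For y ∈ ℕ define S(y) := {p ∈ Π : ∃τ, p ∈ F(τ) and anap_p^τ = y}. If S(y) ≠ ∅, then every Q ⊆ S(y) with |Q| = y satisfies Correct ⊆ Q. Consequently, for any y₁, y₂ with S(y₁) ≠ ∅ and S(y₂) ≠ ∅, any Q₁ ⊆ S(y₁) with |Q₁| = y₁ and any Q₂ ⊆ S(y₂) with |Q₂| = y₂ satisfy Correct ⊆ Q₁ ∩ Q₂, and in particular Q₁ ∩ Q₂ ≠ ∅. (This is the quorum-intersection core of the safety proof of the reduction from AP̄ to HΣ.) -/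
/-- Quorum-intersection core of the safety proof of the reduction
from AP̄ to HΣ.  With `F` antitone, `Correct = ⋂ τ, F τ` nonempty, and `anap`
satisfying the AP̄ Safety property, let `S y` be the set of processes that at
some time while alive output `y`.  If `S y ≠ ∅`, then every `Q ⊆ S y` with
`|Q| = y` contains `Correct`; consequently any two such quora (for values
`y₁, y₂`) both contain `Correct` and hence intersect. -/
theorem ap_quorum_intersection
    {Proc : Type*} [Fintype Proc]
    (F : ℕ → Finset Proc) (hF : Antitone F)
    (Correct : Set Proc)
    (hCdef : Correct = ⋂ τ, (F τ : Set Proc)) (hC : Correct.Nonempty)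
    (anap : Proc → ℕ → ℕ)
    (apSafety : ∀ p τ, (F τ).card ≤ anap p τ)
    (S : ℕ → Set Proc)
    (hS : ∀ y, S y = {p | ∃ τ, p ∈ F τ ∧ anap p τ = y}) :
    (∀ y, (S y).Nonempty → ∀ Q ⊆ S y, Q.ncard = y → Correct ⊆ Q) ∧
    (∀ y₁ y₂, (S y₁).Nonempty → (S y₂).Nonempty →
      ∀ Q₁ ⊆ S y₁, ∀ Q₂ ⊆ S y₂, Q₁.ncard = y₁ → Q₂.ncard = y₂ →
      Correct ⊆ Q₁ ∩ Q₂ ∧ (Q₁ ∩ Q₂).Nonempty) := by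
  have main : ∀ y, (S y).Nonempty → ∀ Q ⊆ S y, Q.ncard = y → Correct ⊆ Q := by
    intro y hy Q hQS hcard
    -- y ≥ 1, hence Q nonempty
    obtain ⟨p, hp⟩ := hy
    rw [hS y] at hQS hp
    obtain ⟨τp, hpF, hpa⟩ := hp
    have hy1 : 1 ≤ y := by
      have := apSafety p τp
      rw [hpa] at this
      calc 1 ≤ (F τp).card := Finset.card_pos.mpr ⟨p, hpF⟩
        _ ≤ y := this
    have hQne : Q.Nonempty := by
      rw [← Set.nonempty_iff_ne_empty.symm] at *
      intro h
      rw [h, Set.ncard_empty] at hcard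
      omega
    -- choose witness times
    choose tau htau using fun (q : Q) => hQS q.2
    -- pick minimal witness time
    have hfin : (Set.univ : Set Q).Finite := Set.finite_univ
    obtain ⟨q₀, -, hmin⟩ := Set.exists_min_image (Set.univ : Set Q) tau hfin
      ⟨⟨hQne.choose, hQne.choose_spec⟩, Set.mem_univ _⟩
    set τ := tau q₀ with hτ
    have hQF : Q ⊆ (F τ : Set Proc) := by
      intro q hq
      have h1 := (htau ⟨q, hq⟩).1
      have h2 : F (tau ⟨q, hq⟩) ⊆ F τ := hF (hmin ⟨q, hq⟩ (Set.mem_univ _))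
      exact h2 h1
    have hcardF : (F τ).card ≤ y := by
      have := apSafety q₀ τ
      rw [(htau q₀).2] at this
      exact this
    have hEq : Q = (F τ : Set Proc) := by
      exact Set.eq_of_subset_of_ncard_le hQF
        (by simpa [Set.ncard_coe_finset, hcard] using hcardF) (F τ).finite_toSet
    rw [hEq, hCdef]
    exact Set.iInter_subset _ τ
  refine ⟨main, fun y₁ y₂ h1 h2 Q₁ hQ1 Q₂ hQ2 hc1 hc2 => ?_⟩
  have hsub : Correct ⊆ Q₁ ∩ Q₂ :=
    Set.subset_inter (main y₁ h1 Q₁ hQ1 hc1) (main y₂ h2 Q₂ hQ2 hc2)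
  exact ⟨hsub, hC.mono hsub⟩
end

section
/- Let Π be a finite type, F : ℕ → Finset Π antitone, and anap : Π → ℕ → ℕ satisfy anap_p^τ ≥ |F(τ)| for all p ∈ Π and τ ∈ ℕ. For y ∈ ℕ define S(y) := {p ∈ Π : ∃τ, p ∈ F(τ) and anap_p^τ = y}. Then for every y with S(y) ≠ ∅, |S(y)| ≤ y. -/
/-- With `F` antitone and `anap` satisfying the AP̄ Safety
property, let `S y` be the set of processes that at some time while alive
output `y`.  Then for every `y` with `S y ≠ ∅`, `|S y| ≤ y`. -/
theorem ap_quorum_card_le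
    {Proc : Type*} [Fintype Proc]
    (F : ℕ → Finset Proc) (hF : Antitone F)
    (anap : Proc → ℕ → ℕ)
    (apSafety : ∀ p τ, (F τ).card ≤ anap p τ)
    (S : ℕ → Set Proc)
    (hS : ∀ y, S y = {p | ∃ τ, p ∈ F τ ∧ anap p τ = y}) :
    ∀ y, (S y).Nonempty → (S y).ncard ≤ y := by
  intro y ⟨p0, hp0⟩
  rw [hS] at hp0
  obtain ⟨τ0, hmem0, heq0⟩ := hp0
  have hex : ∃ τ, ∃ p, p ∈ F τ ∧ anap p τ = y := ⟨τ0, p0, hmem0, heq0⟩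
  set τs := Nat.find hex with hτs
  obtain ⟨q, hq, hqy⟩ := Nat.find_spec hex
  have hsub : S y ⊆ ↑(F τs) := by
    intro p hp
    rw [hS] at hp
    obtain ⟨τ, hmem, heq⟩ := hp
    have : τs ≤ τ := Nat.find_le ⟨p, hmem, heq⟩
    exact hF this hmem
  calc (S y).ncard ≤ (F τs : Set Proc).ncard :=
        Set.ncard_le_ncard hsub (Set.toFinite _)
    _ = (F τs).card := by simp
    _ ≤ anap q τs := apSafety q τs
    _ = y := hqy
end

section
/- Let Π be an anonymous system with an evolving failure pattern F (antitone F : ℕ → Finset Π with Correct = ⋂_τ F(τ) nonempty), and let anap be an AP̄-history for F (satisfying both Safety and Liveness). Define h_labels_p^τ := {⊥^{anap_p^{τ'}} : τ' ≤ τ and p ∈ F(τ')} and h_quora_p^τ := {(⊥^{anap_p^{τ'}}, ⊥^{anap_p^{τ'}}) : τ' ≤ τ and p ∈ F(τ')}. Then (h_quora, h_labels) satisfies the HΣ Liveness property: for every p ∈ Correct there is τ such that for every τ' ≥ τ some (x,m) ∈ h_quora_p^{τ'} has m ⊆ I(S(x) ∩ Correct), where S(x) := {q ∈ Π : ∃τ,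 x ∈ h_labels_q^τ}; the witnessing label is x = ⊥^{|Correct|}. -/
/-- In an anonymous system with an evolving failure pattern `F`
(antitone, `Correct = ⋂ τ, F τ` nonempty), if `anap` is an AP̄-history
(Safety and Liveness), then the derived pair `(h_quora, h_labels)` satisfies
the HΣ Liveness property, with witnessing label `x = ⊥^{|Correct|}`.
Here `I(Q) = ⊥^{|Q|}` and `⊥ = ()`. -/
theorem ap_to_hs_liveness
    {Proc : Type*} [Fintype Proc] [Nonempty Proc]
    (F : ℕ → Finset Proc) (hF : Antitone F)
    (Correct : Set Proc)
    (hCdef : Correct = ⋂ τ, (F τ : Set Proc)) (hC : Correct.Nonempty)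
    (anap : Proc → ℕ → ℕ)
    -- AP̄ Safety
    (apSafety : ∀ p τ, (F τ).card ≤ anap p τ)
    -- AP̄ Liveness
    (apLiveness : ∃ τ, ∀ p ∈ Correct, ∀ τ', τ ≤ τ' → anap p τ' = Correct.ncard)
    (h_labels : Proc → ℕ → Set (Multiset Unit))
    (hlab : ∀ p τ, h_labels p τ =
      {x | ∃ τ' ≤ τ, p ∈ F τ' ∧ x = Multiset.replicate (anap p τ') ()})
    (h_quora : Proc → ℕ → Set (Multiset Unit × Multiset Unit))
    (hquo : ∀ p τ, h_quora p τ =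
      {q | ∃ τ' ≤ τ, p ∈ F τ' ∧
        q = (Multiset.replicate (anap p τ') (), Multiset.replicate (anap p τ') ())})
    (S : Multiset Unit → Set Proc)
    (hS : ∀ x, S x = {q | ∃ τ, x ∈ h_labels q τ}) :
    -- HΣ Liveness, with witnessing label x = ⊥^{|Correct|}
    ∀ p ∈ Correct, ∃ τ, ∀ τ', τ ≤ τ' → ∃ m,
      (Multiset.replicate Correct.ncard (), m) ∈ h_quora p τ' ∧
      m ≤ Multiset.replicate
            ((S (Multiset.replicate Correct.ncard ()) ∩ Correct).ncard) () := by
  obtain ⟨τ₀, hτ₀⟩ := apLiveness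
  intro p hp
  have hmem : ∀ q ∈ Correct, ∀ τ, q ∈ F τ := by
    intro q hq τ
    rw [hCdef] at hq
    exact Set.mem_iInter.mp hq τ
  -- S x ∩ Correct = Correct for x = replicate |Correct| ()
  have hSC : (S (Multiset.replicate Correct.ncard ()) ∩ Correct) = Correct := by
    apply Set.inter_eq_right.mpr
    intro q hq
    rw [hS]
    refine ⟨τ₀, ?_⟩
    rw [hlab]
    exact ⟨τ₀, le_refl _, hmem q hq τ₀, by rw [hτ₀ q hq τ₀ le_rfl]⟩
  refine ⟨τ₀, fun τ' hτ' => ⟨Multiset.replicate Correct.ncard (), ?_, ?_⟩⟩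
  · rw [hquo]
    exact ⟨τ', le_rfl, hmem p hp τ', by rw [hτ₀ p hp τ' hτ']⟩
  · rw [hSC]
end

section
/- Let Π be a system with unique identifiers (id : Π → Ident injective) and failure pattern Correct, and let trusted be a Σ-history with trusted_p^τ ⊆ I(Π) for all p and τ. Define (labels are finite sets of identifiers) h_labels_p^τ := {s : s ⊆ I(Π) and id(p) ∈ s} for every τ, and h_quora_p^τ := {(q, q̂) : ∃τ' ≤ τ, q = trusted_p^{τ'}}, where q̂ is the finite set q viewed as a multiset (each identifier with multiplicity 1). Then (h_quora, h_labels) satisfies all four HΣ properties (Validity, Monotonicity, Liveness, Safety). (A failure detector of class HΣ can be obtained from any detector of class Σ without communication when every process initially knows the membership I(Π); part of Theorem 1.) -/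
/-- `idsOf ident S` is the multiset `I(S)` of identifiers of the processes
in the (necessarily finite) set `S`. -/
noncomputable def idsOf {Proc Ident : Type*} [Fintype Proc]
    (ident : Proc → Ident) (S : Set Proc) : Multiset Ident :=
  (Set.toFinite S).toFinset.val.map ident

/-- In a system with unique identifiers where every process knows
the membership `I(Π)`, if `trusted` is a Σ-history (Liveness and Safety) with
`trusted_p^τ ⊆ I(Π)`, then the derived pair `(h_quora, h_labels)` — where the
labels of `p` are all the subsets of `I(Π)` containing `id(p)`, and the quora
of `p` at time `τ` are the pairs `(q, q̂)` for the values `q` taken by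
`trusted_p` up to time `τ` — satisfies the four HΣ properties. -/
theorem sigma_to_hs_all
    {Proc Ident : Type*} [Fintype Proc] [Nonempty Proc] [DecidableEq Ident]
    (ident : Proc → Ident) (hinj : Function.Injective ident)
    (Correct : Set Proc) (hC : Correct.Nonempty)
    (trusted : Proc → ℕ → Finset Ident)
    (htr : ∀ p τ, trusted p τ ⊆ Finset.univ.image ident)
    -- Σ Liveness: eventually trusted_p ⊆ I(Correct)
    (sLiveness : ∀ p ∈ Correct, ∃ τ, ∀ τ', τ ≤ τ' →
      ∀ i ∈ trusted p τ', ∃ q ∈ Correct, ident q = i)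
    -- Σ Safety
    (sSafety : ∀ p q τ τ', (trusted p τ ∩ trusted q τ').Nonempty)
    -- the derived HΣ history (labels are finite sets of identifiers)
    (h_labels : Proc → ℕ → Set (Finset Ident))
    (hlab : ∀ p τ, h_labels p τ =
      {s | s ⊆ Finset.univ.image ident ∧ ident p ∈ s})
    (h_quora : Proc → ℕ → Set (Finset Ident × Multiset Ident))
    (hquo : ∀ p τ, h_quora p τ =
      {q | ∃ τ' ≤ τ, q = (trusted p τ', (trusted p τ').val)})
    (S : Finset Ident → Set Proc)
    (hS : ∀ x, S x = {p | ∃ τ, x ∈ h_labels p τ}) :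
    -- HΣ Validity
    (∀ p τ x m m', (x, m) ∈ h_quora p τ → (x, m') ∈ h_quora p τ → m = m') ∧
    -- HΣ Monotonicity
    (∀ p τ τ', τ ≤ τ' → h_labels p τ ⊆ h_labels p τ' ∧
      ∀ x m, (x, m) ∈ h_quora p τ → ∃ m' ≤ m, (x, m') ∈ h_quora p τ') ∧
    -- HΣ Liveness
    (∀ p ∈ Correct, ∃ τ, ∀ τ', τ ≤ τ' → ∃ x m, (x, m) ∈ h_quora p τ' ∧
      m ≤ idsOf ident (S x ∩ Correct)) ∧
    -- HΣ Safety
    (∀ p₁ p₂ τ₁ τ₂ x₁ m₁ x₂ m₂,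
      (x₁, m₁) ∈ h_quora p₁ τ₁ → (x₂, m₂) ∈ h_quora p₂ τ₂ →
      ∀ Q₁ Q₂ : Set Proc, Q₁ ⊆ S x₁ → Q₂ ⊆ S x₂ →
      idsOf ident Q₁ = m₁ → idsOf ident Q₂ = m₂ → (Q₁ ∩ Q₂).Nonempty) := by
  refine ⟨?_, ?_, ?_, ?_⟩
  · -- Validity
    intro p τ x m m' hm hm'
    rw [hquo] at hm hm'
    obtain ⟨τ₁, -, h₁⟩ := hm
    obtain ⟨τ₂, -, h₂⟩ := hm'
    have e₁ := congrArg Prod.fst h₁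
    have e₂ := congrArg Prod.fst h₂
    simp at e₁ e₂
    have := congrArg Prod.snd h₁
    have := congrArg Prod.snd h₂
    simp_all
  · -- Monotonicity
    intro p τ τ' hττ'
    constructor
    · rw [hlab, hlab]
    · intro x m hm
      rw [hquo] at hm
      obtain ⟨τ₀, hτ₀, h⟩ := hm
      exact ⟨m, le_refl m, by rw [hquo]; exact ⟨τ₀, hτ₀.trans hττ', h⟩⟩
  · -- Liveness
    intro p hp
    obtain ⟨τ, hτ⟩ := sLiveness p hp
    refine ⟨τ, fun τ' hττ' => ⟨trusted p τ', (trusted p τ').val, ?_, ?_⟩⟩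
    · rw [hquo]; exact ⟨τ', le_refl τ', rfl⟩
    · rw [Multiset.le_iff_subset (trusted p τ').nodup]
      intro i hi
      have hi' : i ∈ trusted p τ' := hi
      obtain ⟨q, hqC, hqi⟩ := hτ τ' hττ' i hi'
      have hqS : q ∈ S (trusted p τ') := by
        rw [hS]
        exact ⟨0, by rw [hlab]; exact ⟨htr p τ', hqi ▸ hi'⟩⟩
      rw [idsOf, Multiset.mem_map]
      exact ⟨q, by rw [Finset.mem_val, Set.Finite.mem_toFinset]; exact ⟨hqS, hqC⟩, hqi⟩
  · -- Safety
    intro p₁ p₂ τ₁ τ₂ x₁ m₁ x₂ m₂ h₁ h₂ Q₁ Q₂ hQ₁ hQ₂ hid₁ hid₂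
    rw [hquo] at h₁ h₂
    obtain ⟨σ₁, -, e₁⟩ := h₁
    obtain ⟨σ₂, -, e₂⟩ := h₂
    have ex₁ : x₁ = trusted p₁ σ₁ := congrArg Prod.fst e₁
    have em₁ : m₁ = (trusted p₁ σ₁).val := congrArg Prod.snd e₁
    have ex₂ : x₂ = trusted p₂ σ₂ := congrArg Prod.fst e₂
    have em₂ : m₂ = (trusted p₂ σ₂).val := congrArg Prod.snd e₂
    obtain ⟨i, hi⟩ := sSafety p₁ p₂ σ₁ σ₂
    rw [Finset.mem_inter] at hi
    have hi₁ : i ∈ m₁ := by rw [em₁, Finset.mem_val]; exact hi.1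
    have hi₂ : i ∈ m₂ := by rw [em₂, Finset.mem_val]; exact hi.2
    rw [← hid₁, idsOf, Multiset.mem_map] at hi₁
    rw [← hid₂, idsOf, Multiset.mem_map] at hi₂
    obtain ⟨a, ha, hai⟩ := hi₁
    obtain ⟨b, hb, hbi⟩ := hi₂
    rw [Finset.mem_val, Set.Finite.mem_toFinset] at ha hb
    have : a = b := hinj (by rw [hai, hbi])
    exact ⟨a, ha, this ▸ hb⟩
end

section
/- Let Π be a system with unique identifiers (id : Π → Ident injective), and let trusted satisfy the Σ Safety property. Define h_labels_p^τ := {s : s ⊆ I(Π) and id(p) ∈ s} for every τ, and h_quora_p^τ := {(q, q̂) : ∃τ' ≤ τ, q = trusted_p^{τ'}}, where q̂ is the finite set q viewed as a multiset. Then (h_quora, h_labels) satisfies the HΣ Safety property: for all p₁,p₂ ∈ Π, τ₁,τ₂ ∈ ℕ, (q₁,q̂₁) ∈ h_quora_{p₁}^{τ₁}, (q₂,q̂₂) ∈ h_quora_{p₂}^{τ₂}, and all Q₁ ⊆ S(q₁), Q₂ ⊆ S(q₂) with I(Q₁) = q̂₁ and I(Q₂) = q̂₂, one has Q₁ ∩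 Q₂ ≠ ∅, where S(x) := {p ∈ Π : ∃τ, x ∈ h_labels_p^τ}. -/
/-- In a system with unique identifiers, if `trusted` satisfies
the Σ Safety property, then the derived pair `(h_quora, h_labels)` satisfies
the HΣ Safety property. -/
theorem sigma_to_hs_safety
    {Proc Ident : Type*} [Fintype Proc] [Nonempty Proc] [DecidableEq Ident]
    (ident : Proc → Ident) (hinj : Function.Injective ident)
    (trusted : Proc → ℕ → Finset Ident)
    -- Σ Safety
    (sSafety : ∀ p q τ τ', (trusted p τ ∩ trusted q τ').Nonempty)
    (h_labels : Proc → ℕ → Set (Finset Ident))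
    (hlab : ∀ p τ, h_labels p τ =
      {s | s ⊆ Finset.univ.image ident ∧ ident p ∈ s})
    (h_quora : Proc → ℕ → Set (Finset Ident × Multiset Ident))
    (hquo : ∀ p τ, h_quora p τ =
      {q | ∃ τ' ≤ τ, q = (trusted p τ', (trusted p τ').val)})
    (S : Finset Ident → Set Proc)
    (hS : ∀ x, S x = {p | ∃ τ, x ∈ h_labels p τ}) :
    -- HΣ Safety
    ∀ p₁ p₂ τ₁ τ₂ x₁ m₁ x₂ m₂,
      (x₁, m₁) ∈ h_quora p₁ τ₁ → (x₂, m₂) ∈ h_quora p₂ τ₂ →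
      ∀ Q₁ Q₂ : Set Proc, Q₁ ⊆ S x₁ → Q₂ ⊆ S x₂ →
      idsOf ident Q₁ = m₁ → idsOf ident Q₂ = m₂ → (Q₁ ∩ Q₂).Nonempty := by
  intro p₁ p₂ τ₁ τ₂ x₁ m₁ x₂ m₂ h1 h2 Q₁ Q₂ _ _ hm₁ hm₂
  rw [hquo] at h1 h2
  obtain ⟨σ₁, -, he₁⟩ := h1
  obtain ⟨σ₂, -, he₂⟩ := h2
  have hm1 : m₁ = (trusted p₁ σ₁).val := congrArg Prod.snd he₁
  have hm2 : m₂ = (trusted p₂ σ₂).val := congrArg Prod.snd he₂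
  obtain ⟨i, hi⟩ := sSafety p₁ p₂ σ₁ σ₂
  rw [Finset.mem_inter] at hi
  have hi1 : i ∈ idsOf ident Q₁ := by rw [hm₁, hm1]; exact hi.1
  have hi2 : i ∈ idsOf ident Q₂ := by rw [hm₂, hm2]; exact hi.2
  obtain ⟨a, ha, hai⟩ := Multiset.mem_map.mp hi1
  obtain ⟨b, hb, hbi⟩ := Multiset.mem_map.mp hi2
  have : a = b := hinj (hai.trans hbi.symm)
  subst this
  exact ⟨a, (Set.Finite.mem_toFinset _).mp ha, (Set.Finite.mem_toFinset _).mp hb⟩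
end

section
/- Let Π be a system with unique identifiers (id : Π → Ident injective) and failure pattern Correct, and let trusted satisfy the Σ Liveness property with trusted_p^τ ⊆ I(Π) for all p and τ. Define h_labels_p^τ := {s : s ⊆ I(Π) and id(p) ∈ s} for every τ, and h_quora_p^τ := {(q, q̂) : ∃τ' ≤ τ, q = trusted_p^{τ'}}, where q̂ is the finite set q viewed as a multiset. Then (h_quora, h_labels) satisfies the HΣ Liveness property: for every p ∈ Correct there is τ such that for every τ' ≥ τ some (x,m) ∈ h_quora_p^{τ'} has m ⊆ I(S(x) ∩ Correct), where S(x) := {p ∈ Π : ∃τ, x ∈ h_labels_p^τ}. -/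
/-- In a system with unique identifiers, if `trusted` satisfies
the Σ Liveness property and `trusted_p^τ ⊆ I(Π)`, then the derived pair
`(h_quora, h_labels)` satisfies the HΣ Liveness property. -/
theorem sigma_to_hs_liveness
    {Proc Ident : Type*} [Fintype Proc] [Nonempty Proc] [DecidableEq Ident]
    (ident : Proc → Ident) (hinj : Function.Injective ident)
    (Correct : Set Proc) (hC : Correct.Nonempty)
    (trusted : Proc → ℕ → Finset Ident)
    (htr : ∀ p τ, trusted p τ ⊆ Finset.univ.image ident)
    -- Σ Liveness: eventually trusted_p ⊆ I(Correct)
    (sLiveness : ∀ p ∈ Correct, ∃ τ, ∀ τ', τ ≤ τ' →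
      ∀ i ∈ trusted p τ', ∃ q ∈ Correct, ident q = i)
    (h_labels : Proc → ℕ → Set (Finset Ident))
    (hlab : ∀ p τ, h_labels p τ =
      {s | s ⊆ Finset.univ.image ident ∧ ident p ∈ s})
    (h_quora : Proc → ℕ → Set (Finset Ident × Multiset Ident))
    (hquo : ∀ p τ, h_quora p τ =
      {q | ∃ τ' ≤ τ, q = (trusted p τ', (trusted p τ').val)})
    (S : Finset Ident → Set Proc)
    (hS : ∀ x, S x = {p | ∃ τ, x ∈ h_labels p τ}) :
    -- HΣ Liveness
    ∀ p ∈ Correct, ∃ τ, ∀ τ', τ ≤ τ' → ∃ x m, (x, m) ∈ h_quora p τ' ∧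
      m ≤ idsOf ident (S x ∩ Correct) := by
  intro p hp
  obtain ⟨τ, hτ⟩ := sLiveness p hp
  refine ⟨τ, fun τ' hτ' => ⟨trusted p τ', (trusted p τ').val, ?_, ?_⟩⟩
  · rw [hquo]; exact ⟨τ', le_refl _, rfl⟩
  · have hnd : ((trusted p τ').val : Multiset Ident).Nodup := (trusted p τ').nodup
    refine (Multiset.le_iff_subset hnd).mpr ?_
    intro i hi
    have hi' : i ∈ trusted p τ' := hi
    obtain ⟨q, hqC, hqi⟩ := hτ τ' hτ' i hi'
    simp only [idsOf, Multiset.mem_map, Finset.mem_val, Set.Finite.mem_toFinset, Set.mem_inter_iff]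
    refine ⟨q, ⟨?_, hqC⟩, hqi⟩
    rw [hS]
    exact ⟨0, by rw [hlab]; exact ⟨htr p τ', hqi ▸ hi'⟩⟩
end

section
/- Let Π be a homonymous system with failure pattern Correct, where Ident is linearly ordered, and let h_trusted be a ◇HP̄-history. Fix a default identifier d and define h_leader_p^τ as the minimum element of the multiset h_trusted_p^τ if it is nonempty and d otherwise, and h_multiplicity_p^τ as the multiplicity of h_leader_p^τ in h_trusted_p^τ. Then (h_leader, h_multiplicity) satisfies the HΩ Election property, with eventual common leader identifier ℓ = min I(Correct) and eventual common multiplicity mult_{I(Correct)}(ℓ). (A failure detector of class HΩ can be obtained from any detector of class ◇HP̄ without any communication.) -/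
/-- In a homonymous system with linearly ordered identifiers,
given a ◇HP̄-history `h_trusted`, defining `h_leader_p^τ` as the minimum of
the multiset `h_trusted_p^τ` (and the default identifier `d` if that multiset
is empty), and `h_multiplicity_p^τ` as the multiplicity of `h_leader_p^τ` in
`h_trusted_p^τ`, the pair `(h_leader, h_multiplicity)` satisfies the HΩ
Election property, with eventual common leader `ℓ = min I(Correct)` and
eventual common multiplicity `mult_{I(Correct)}(ℓ)`. -/
theorem hp_to_homega
    {Proc Ident : Type*} [Fintype Proc] [Nonempty Proc]
    [LinearOrder Ident] [DecidableEq Ident]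
    (ident : Proc → Ident)
    (Correct : Set Proc) (hC : Correct.Nonempty)
    (h_trusted : Proc → ℕ → Multiset Ident)
    -- ◇HP̄ Liveness
    (hpLiveness : ∀ p ∈ Correct, ∃ τ, ∀ τ', τ ≤ τ' →
      h_trusted p τ' = idsOf ident Correct)
    (d : Ident)
    (h_leader : Proc → ℕ → Ident)
    (hld : ∀ p τ, h_leader p τ = WithTop.untopD d ((h_trusted p τ).toFinset.min))
    (h_multiplicity : Proc → ℕ → ℕ)
    (hmu : ∀ p τ, h_multiplicity p τ = (h_trusted p τ).count (h_leader p τ))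
    (ℓ : Ident)
    (hℓ : ℓ = WithTop.untopD d ((idsOf ident Correct).toFinset.min)) :
    -- HΩ Election, with leader ℓ = min I(Correct)
    ℓ ∈ idsOf ident Correct ∧
    ∃ τ, ∀ τ', τ ≤ τ' → ∀ p ∈ Correct,
      h_leader p τ' = ℓ ∧
      h_multiplicity p τ' = (idsOf ident Correct).count ℓ := by
    classical
  obtain ⟨p0, hp0⟩ := hC
  have hmem : ident p0 ∈ idsOf ident Correct := by
    simp [idsOf]
    exact ⟨p0, by simpa using hp0, rfl⟩
  have hfne : (idsOf ident Correct).toFinset.Nonempty :=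
    ⟨ident p0, Multiset.mem_toFinset.2 hmem⟩
  obtain ⟨a, ha⟩ := Finset.min_of_nonempty hfne
  have hℓa : ℓ = a := by rw [hℓ, ha]; rfl
  have hℓmem : ℓ ∈ idsOf ident Correct := by
    rw [hℓa]
    exact Multiset.mem_toFinset.1 (Finset.mem_of_min ha)
  refine ⟨hℓmem, ?_⟩
  choose! f hf using hpLiveness
  refine ⟨Finset.univ.sup f, fun τ' hτ' p hp => ?_⟩
  have ht : h_trusted p τ' = idsOf ident Correct :=
    hf p hp τ' (le_trans (Finset.le_sup (Finset.mem_univ p)) hτ')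
  have hl : h_leader p τ' = ℓ := by rw [hld, ht, hℓ]
  exact ⟨hl, by rw [hmu, ht, hl]⟩
end
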